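/- There exists a function f : B × B × B → {0,1} such that for all a, b ∈ B, if S denotes the linear isomorphism of (ℂ²)^{⊗4} permuting the four tensor factors from order (1,2,3,4) to order (2,3,1,4), then S(|φ_a⟩ ⊗ |φ_b⟩) = (1/2) · Σ_{x ∈ B} (−1)^{f(a,b,x)} |φ_x⟩ ⊗ |φ_{a+b+x}⟩, where a + b + x denotes coordinatewise addition modulo 2 in B = (ℤ/2ℤ)². -/
import Mathlib


open TensorProduct

/-- The single-qubit space ℂ². -/
abbrev V : Type := ZMod 2 → ℂ

/-- Standard basis vector |x⟩ of ℂ². -/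
noncomputable def ket (x : ZMod 2) : V := fun i => if i = x then 1 else 0

/-- The Bell state |φ_x^y⟩ = (|0⟩⊗|x⟩ + (−1)^y |1⟩⊗|1−x⟩)/√2. -/
noncomputable def bell (x y : ZMod 2) : TensorProduct ℂ V V :=
  ((Real.sqrt 2 : ℂ))⁻¹ •
    (ket 0 ⊗ₜ[ℂ] ket x + ((-1 : ℂ)) ^ (y.val) • ket 1 ⊗ₜ[ℂ] ket (1 - x))

/-- The four-qubit space (ℂ²)^{⊗4}, grouped as (ℂ²⊗ℂ²)⊗(ℂ²⊗ℂ²). -/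
abbrev W : Type := TensorProduct ℂ (TensorProduct ℂ V V) (TensorProduct ℂ V V)

/-- The Bell alphabet B = (ℤ/2ℤ)². -/
abbrev B : Type := ZMod 2 × ZMod 2

/-- Unnormalized Bell state. -/
noncomputable def bellU (a : B) : TensorProduct ℂ V V :=
  ket 0 ⊗ₜ[ℂ] ket a.1 + ((-1 : ℂ)) ^ (a.2.val) • ket 1 ⊗ₜ[ℂ] ket (1 - a.1)

/-- The explicit sign function. -/
def bellSign (p : B × B × B) : ZMod 2 :=
  p.2.1.2 * (p.1.1 + p.2.2.1) + p.1.1 * p.2.2.2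

lemma sum4 {M : Type} [AddCommMonoid M] (g : B → M) :
    ∑ x : B, g x = g (0,0) + g (0,1) + g (1,0) + g (1,1) := by
  rw [Fintype.sum_prod_type]
  rw [show (Finset.univ : Finset (ZMod 2)) = {0, 1} from rfl]
  simp [Finset.sum_insert, Finset.sum_pair]
  abel

lemma sqrt2_inv_sq : ((Real.sqrt 2 : ℂ))⁻¹ * ((Real.sqrt 2 : ℂ))⁻¹ = (2 : ℂ)⁻¹ := by
  rw [← mul_inv, ← Complex.ofReal_mul, Real.mul_self_sqrt (by norm_num)]
  norm_num

lemma bell_eq (a : B) : bell a.1 a.2 = ((Real.sqrt 2 : ℂ))⁻¹ • bellU a := rfl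

lemma bell_tmul (x y : B) :
    bell x.1 x.2 ⊗ₜ[ℂ] bell y.1 y.2 = (2 : ℂ)⁻¹ • (bellU x ⊗ₜ[ℂ] bellU y) := by
  rw [bell_eq, bell_eq, tmul_smul, ← smul_tmul', smul_smul, sqrt2_inv_sq]

lemma key (S : W →ₗ[ℂ] W)
    (hS : ∀ v1 v2 v3 v4 : V,
      S ((v1 ⊗ₜ[ℂ] v2) ⊗ₜ[ℂ] (v3 ⊗ₜ[ℂ] v4)) = (v2 ⊗ₜ[ℂ] v3) ⊗ₜ[ℂ] (v1 ⊗ₜ[ℂ] v4))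
    (a b : B) :
    S (bellU a ⊗ₜ[ℂ] bellU b) = (2 : ℂ)⁻¹ • ∑ x : B,
      ((-1 : ℂ)) ^ ((bellSign (a, b, x)).val) • (bellU x ⊗ₜ[ℂ] bellU (a + b + x)) := by
  obtain ⟨a1, a2⟩ := a; obtain ⟨b1, b2⟩ := b
  have h2 : ∀ z : ZMod 2, z = 0 ∨ z = 1 := by decide
  rcases h2 a1 with rfl | rfl <;> rcases h2 a2 with rfl | rfl <;>
    rcases h2 b1 with rfl | rfl <;> rcases h2 b2 with rfl | rfl <;>
  · rw [sum4]
    simp only [bellU, bellSign, Prod.mk_add_mk,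
      show ((1:ZMod 2) + 1) = 0 from rfl, show ((1:ZMod 2) + 0) = 1 from rfl,
      show ((0:ZMod 2) + 1) = 1 from rfl, show ((0:ZMod 2) + 0) = 0 from rfl,
      show ((1:ZMod 2) - 1) = 0 from rfl, show ((1:ZMod 2) - 0) = 1 from rfl,
      show ((1:ZMod 2) * 1) = 1 from rfl, show ((1:ZMod 2) * 0) = 0 from rfl,
      show ((0:ZMod 2) * 1) = 0 from rfl, show ((0:ZMod 2) * 0) = 0 from rfl,
      show ZMod.val (0 : ZMod 2) = 0 from rfl, show ZMod.val (1 : ZMod 2) = 1 from rfl,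
      pow_zero, pow_one, one_smul,
      tmul_add, add_tmul, ← smul_tmul', tmul_smul, map_add, map_smul, hS]
    module

/-- there is a sign function f : B×B×B → {0,1} such that for all
a, b ∈ B, S(|φ_a⟩⊗|φ_b⟩) = (1/2)·Σ_{x∈B} (−1)^{f(a,b,x)} |φ_x⟩⊗|φ_{a+b+x}⟩,
where S permutes the four tensor factors from order (1,2,3,4) to (2,3,1,4). -/
theorem stmt7 (S : W ≃ₗ[ℂ] W)
    (hS : ∀ v1 v2 v3 v4 : V,
      S ((v1 ⊗ₜ[ℂ] v2) ⊗ₜ[ℂ] (v3 ⊗ₜ[ℂ] v4)) = (v2 ⊗ₜ[ℂ] v3) ⊗ₜ[ℂ] (v1 ⊗ₜ[ℂ] v4)) :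
    ∃ f : B × B × B → ZMod 2, ∀ a b : B,
      S (bell a.1 a.2 ⊗ₜ[ℂ] bell b.1 b.2)
        = (2 : ℂ)⁻¹ • ∑ x : B,
            ((-1 : ℂ)) ^ ((f (a, b, x)).val) •
              (bell x.1 x.2 ⊗ₜ[ℂ] bell (a + b + x).1 (a + b + x).2) := by
  refine ⟨bellSign, fun a b => ?_⟩
  have hk := key S.toLinearMap (fun v1 v2 v3 v4 => hS v1 v2 v3 v4) a b
  have hST : ∀ w : W, S w = S.toLinearMap w := fun w => rfl
  calc S (bell a.1 a.2 ⊗ₜ[ℂ] bell b.1 b.2)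
      = (2 : ℂ)⁻¹ • S.toLinearMap (bellU a ⊗ₜ[ℂ] bellU b) := by
        rw [bell_tmul, hST, map_smul]
    _ = (2 : ℂ)⁻¹ • ((2 : ℂ)⁻¹ • ∑ x : B,
          ((-1 : ℂ)) ^ ((bellSign (a, b, x)).val) • (bellU x ⊗ₜ[ℂ] bellU (a + b + x))) := by
        rw [hk]
    _ = (2 : ℂ)⁻¹ • ∑ x : B,
          ((-1 : ℂ)) ^ ((bellSign (a, b, x)).val) •
            (bell x.1 x.2 ⊗ₜ[ℂ] bell (a + b + x).1 (a + b + x).2) := by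
        congr 1
        rw [Finset.smul_sum]
        refine Finset.sum_congr rfl fun x _ => ?_
        rw [bell_tmul x (a + b + x), smul_comm ((2:ℂ)⁻¹)]
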